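/- Each rewrite step of R applied to a term containing no occurrence of e does not decrease the d-count, where the possible decrease could only come from the rules d·e→e and (d·x)·y→x·(y+x); in the latter case the loss of one d is compensated since every e-free term x satisfies dct(x) ≥ 1. -/
import Mathlib


/-- Ground terms over constants d, e with binary operations + (add) and · (app). -/
inductive Tm : Type
  | d : Tm
  | e : Tm
  | add : Tm → Tm → Tm
  | app : Tm → Tm → Tm
  deriving DecidableEq

open Tm

/-- Root rewrite steps: instances of the oriented rules. -/
inductive Root : Tm → Tm → Prop
  | addE (x) : Root (add x e) x
  | eAdd (x) : Root (add e x) x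
  | assoc (x y z) : Root (add (add x y) z) (add x (add y z))
  | appAdd (x y z) : Root (app (add x y) z) (app y (app x z))
  | appD (x y) : Root (app (app d x) y) (app x (add y x))
  | appE (x) : Root (app e x) x
  | dE : Root (app d e) e

/-- One rewrite step: a root step applied at some subterm position. -/
inductive Step : Tm → Tm → Prop
  | root {t u} : Root t u → Step t u
  | addL {t t' u} : Step t t' → Step (add t u) (add t' u)
  | addR {t u u'} : Step u u' → Step (add t u) (add t u')
  | appL {t t' u} : Step t t' → Step (app t u) (app t' u)
  | appR {t u u'} : Step u u' → Step (app t u) (app t u')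

/-- Zero or more rewrite steps. -/
def Steps : Tm → Tm → Prop := Relation.ReflTransGen Step

/-- A normal form is a term to which no rule applies. -/
def NormalForm (t : Tm) : Prop := ∀ u, ¬ Step t u

/-- Provable equality in the equational theory (reflexive symmetric transitive
congruence closure of the rule instances). -/
def TermEq : Tm → Tm → Prop := Relation.EqvGen Step

/-- The (reflexive) subterm relation. -/
inductive Subterm : Tm → Tm → Prop
  | refl (t) : Subterm t t
  | addL {s t u} : Subterm s t → Subterm s (add t u)
  | addR {s t u} : Subterm s u → Subterm s (add t u)
  | appL {s t u} : Subterm s t → Subterm s (app t u)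
  | appR {s t u} : Subterm s u → Subterm s (app t u)

/-- The d-count: number of occurrences of d. -/
def dct : Tm → ℕ
  | .d => 1
  | .e => 0
  | .add a b => dct a + dct b
  | .app a b => dct a + dct b

/-- a rewrite step on an e-free term does not decrease the
d-count; moreover every e-free term has d-count at least 1. -/
theorem step_dct_mono :
    (∀ t u : Tm, ¬ Subterm e t → Step t u → dct t ≤ dct u) ∧
    (∀ x : Tm, ¬ Subterm e x → 1 ≤ dct x) := by
  have pos : ∀ x : Tm, ¬ Subterm e x → 1 ≤ dct x := by
    intro x
    induction x with
    | d => intro _; simp [dct]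
    | e => intro h; exact absurd (Subterm.refl e) h
    | add a b iha _ =>
        intro h
        have := iha (fun hs => h (Subterm.addL hs))
        simp [dct]; omega
    | app a b iha _ =>
        intro h
        have := iha (fun hs => h (Subterm.appL hs))
        simp [dct]; omega
  refine ⟨?_, pos⟩
  intro t u hfree hstep
  induction hstep with
  | root hr =>
      cases hr with
      | addE x => exact absurd (Subterm.addR (Subterm.refl e)) hfree
      | eAdd x => exact absurd (Subterm.addL (Subterm.refl e)) hfree
      | assoc x y z => simp [dct]; omega
      | appAdd x y z => simp [dct]; omega
      | appD x y =>
          have hx : 1 ≤ dct x :=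
            pos x (fun hs => hfree (Subterm.appL (Subterm.appR hs)))
          simp [dct]; omega
      | appE x => exact absurd (Subterm.appL (Subterm.refl e)) hfree
      | dE => exact absurd (Subterm.appR (Subterm.refl e)) hfree
  | addL h ih =>
      have := ih (fun hs => hfree (Subterm.addL hs))
      simp [dct]; omega
  | addR h ih =>
      have := ih (fun hs => hfree (Subterm.addR hs))
      simp [dct]; omega
  | appL h ih =>
      have := ih (fun hs => hfree (Subterm.appL hs))
      simp [dct]; omega
  | appR h ih =>
      have := ih (fun hs => hfree (Subterm.appR hs))
      simp [dct]; omega
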